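/- Let (Ω, P) be a probability space, n ∈ ℕ, and let u₁,…,uₙ be nonnegative functions in L¹(Ω). Set Mₖ = (∑_{m=1}^k u_m²)^{1/2}. Suppose v₁,…,vₙ and w₁,…,wₙ are nonnegative integrable functions with E[(M_{k−1}² + vₖ²)^{1/2}] + E[wₖ] ≤ E[Mₖ] for all 1 ≤ k ≤ n. Then E[(∑_{k=1}^n vₖ²)^{1/2}] + ∑_{k=1}^n E[wₖ] ≤ 2 E[(∑_{k=1}^n uₖ²)^{1/2}]. -/

import Mathlib

open MeasureTheory Finset

/-- `√(a+b) ≤ √a + √b`. -/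
lemma my_sqrt_add_le (a b : ℝ) (ha : 0 ≤ a) (hb : 0 ≤ b) :
    Real.sqrt (a + b) ≤ Real.sqrt a + Real.sqrt b := by
  have h1 : a + b ≤ (Real.sqrt a + Real.sqrt b) ^ 2 := by
    nlinarith [Real.sq_sqrt ha, Real.sq_sqrt hb, Real.sqrt_nonneg a, Real.sqrt_nonneg b]
  calc Real.sqrt (a + b) ≤ Real.sqrt ((Real.sqrt a + Real.sqrt b) ^ 2) :=
        Real.sqrt_le_sqrt h1
    _ = Real.sqrt a + Real.sqrt b := Real.sqrt_sq (by positivity)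

/-- `√(∑ f) ≤ ∑ √f` for nonnegative `f`. -/
lemma my_sqrt_sum_le {ι : Type*} (s : Finset ι) (f : ι → ℝ) (hf : ∀ i ∈ s, 0 ≤ f i) :
    Real.sqrt (∑ i ∈ s, f i) ≤ ∑ i ∈ s, Real.sqrt (f i) := by
  classical
  induction s using Finset.induction with
  | empty => simp
  | insert _ _ hx ih =>
    rename_i a t
    rw [Finset.sum_insert hx, Finset.sum_insert hx]
    calc Real.sqrt (f a + ∑ i ∈ t, f i)
        ≤ Real.sqrt (f a) + Real.sqrt (∑ i ∈ t, f i) :=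
          my_sqrt_add_le _ _ (hf a (Finset.mem_insert_self a t))
            (Finset.sum_nonneg fun i hi => hf i (Finset.mem_insert_of_mem hi))
      _ ≤ Real.sqrt (f a) + ∑ i ∈ t, Real.sqrt (f i) := by
          gcongr
          exact ih fun i hi => hf i (Finset.mem_insert_of_mem hi)

/-- concavity-type inequality: `√(A+b) - √A ≤ √(c+b) - √c` when `0 ≤ c ≤ A`, `0 ≤ b`. -/
lemma my_sqrt_diff (A b c : ℝ) (hb : 0 ≤ b) (hc : 0 ≤ c) (hcA : c ≤ A) :
    Real.sqrt (A + b) ≤ Real.sqrt A + (Real.sqrt (c + b) - Real.sqrt c) := by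
  have hA : (0 : ℝ) ≤ A := le_trans hc hcA
  have hzx : Real.sqrt c ≤ Real.sqrt A := Real.sqrt_le_sqrt hcA
  have hzy : Real.sqrt c ≤ Real.sqrt (c + b) := Real.sqrt_le_sqrt (by linarith)
  have h1 : A + b ≤ (Real.sqrt A + (Real.sqrt (c + b) - Real.sqrt c)) ^ 2 := by
    nlinarith [Real.sq_sqrt hA, Real.sq_sqrt hc, Real.sq_sqrt (by linarith : (0:ℝ) ≤ c + b),
      mul_nonneg (sub_nonneg.2 hzx) (sub_nonneg.2 hzy), Real.sqrt_nonneg A,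
      Real.sqrt_nonneg c, Real.sqrt_nonneg (c + b)]
  calc Real.sqrt (A + b)
      ≤ Real.sqrt ((Real.sqrt A + (Real.sqrt (c + b) - Real.sqrt c)) ^ 2) :=
        Real.sqrt_le_sqrt h1
    _ = Real.sqrt A + (Real.sqrt (c + b) - Real.sqrt c) := Real.sqrt_sq (by linarith [Real.sqrt_nonneg A])

/-- telescoping sum over `Icc 1 n`. -/
lemma my_tele (f : ℕ → ℝ) (n : ℕ) :
    ∑ k ∈ Finset.Icc 1 n, (f k - f (k - 1)) = f n - f 0 := by
  induction n with
  | zero => simp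
  | succ m ih =>
    rw [Finset.sum_Icc_succ_top (Nat.le_add_left 1 m)]
    simp only [Nat.add_sub_cancel, ih]
    ring

theorem stmt_2 {Ω : Type*} [MeasurableSpace Ω] (μ : Measure Ω) [IsProbabilityMeasure μ]
    (n : ℕ) (u v w : ℕ → Ω → ℝ)
    (hu : ∀ k ∈ Finset.Icc 1 n, Integrable (u k) μ)
    (hv : ∀ k ∈ Finset.Icc 1 n, Integrable (v k) μ)
    (hw : ∀ k ∈ Finset.Icc 1 n, Integrable (w k) μ)
    (hu0 : ∀ k ∈ Finset.Icc 1 n, ∀ ω, 0 ≤ u k ω)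
    (hv0 : ∀ k ∈ Finset.Icc 1 n, ∀ ω, 0 ≤ v k ω)
    (hw0 : ∀ k ∈ Finset.Icc 1 n, ∀ ω, 0 ≤ w k ω)
    (M : ℕ → Ω → ℝ)
    (hM : ∀ k, ∀ ω, M k ω = Real.sqrt (∑ m ∈ Finset.Icc 1 k, u m ω ^ 2))
    (hyp : ∀ k ∈ Finset.Icc 1 n,
      (∫ ω, Real.sqrt (M (k - 1) ω ^ 2 + v k ω ^ 2) ∂μ) + ∫ ω, w k ω ∂μ
        ≤ ∫ ω, M k ω ∂μ) :
    (∫ ω, Real.sqrt (∑ k ∈ Finset.Icc 1 n, v k ω ^ 2) ∂μ)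
      + ∑ k ∈ Finset.Icc 1 n, ∫ ω, w k ω ∂μ
      ≤ 2 * ∫ ω, Real.sqrt (∑ k ∈ Finset.Icc 1 n, u k ω ^ 2) ∂μ := by
  -- basic facts about M
  have hM0 : ∀ k ω, 0 ≤ M k ω := fun k ω => (hM k ω) ▸ Real.sqrt_nonneg _
  have hMsq : ∀ k, k ≤ n → ∀ ω, M k ω ^ 2 = ∑ m ∈ Finset.Icc 1 k, u m ω ^ 2 := by
    intro k hk ω
    rw [hM k ω]
    exact Real.sq_sqrt (Finset.sum_nonneg fun m _ => sq_nonneg _)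
  have hMmono : ∀ j k, j ≤ k → ∀ ω, M j ω ≤ M k ω := by
    intro j k hjk ω
    rw [hM j ω, hM k ω]
    apply Real.sqrt_le_sqrt
    exact Finset.sum_le_sum_of_subset_of_nonneg
      (Finset.Icc_subset_Icc_right hjk) (fun m _ _ => sq_nonneg _)
  -- integrability of M k for k ≤ n
  have hMint : ∀ k, k ≤ n → Integrable (M k) μ := by
    intro k hk
    have hsub : ∀ m ∈ Finset.Icc 1 k, m ∈ Finset.Icc 1 n := fun m hm =>
      Finset.mem_Icc.2 ⟨(Finset.mem_Icc.1 hm).1, le_trans (Finset.mem_Icc.1 hm).2 hk⟩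
    have haem : AEStronglyMeasurable (M k) μ := by
      have : AEMeasurable (fun ω => ∑ m ∈ Finset.Icc 1 k, u m ω ^ 2) μ :=
        Finset.aemeasurable_fun_sum _ fun m hm =>
          ((hu m (hsub m hm)).aemeasurable.pow_const 2)
      have h2 : AEMeasurable (M k) μ := by
        simp only [funext fun ω => hM k ω]
        exact Real.continuous_sqrt.measurable.comp_aemeasurable this
      exact h2.aestronglyMeasurable
    refine Integrable.mono' (g := fun ω => ∑ m ∈ Finset.Icc 1 k, |u m ω|)
      (integrable_finset_sum _ fun m hm => (hu m (hsub m hm)).abs) haem ?_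
    filter_upwards with ω
    rw [Real.norm_eq_abs, abs_of_nonneg (hM0 k ω), hM k ω]
    calc Real.sqrt (∑ m ∈ Finset.Icc 1 k, u m ω ^ 2)
        ≤ ∑ m ∈ Finset.Icc 1 k, Real.sqrt (u m ω ^ 2) :=
          my_sqrt_sum_le _ _ fun m _ => sq_nonneg _
      _ = ∑ m ∈ Finset.Icc 1 k, |u m ω| := by
          refine Finset.sum_congr rfl fun m _ => ?_
          rw [Real.sqrt_sq_eq_abs]
  -- integrability of the G k functions
  have hGint : ∀ k ∈ Finset.Icc 1 n,
      Integrable (fun ω => Real.sqrt (M (k - 1) ω ^ 2 + v k ω ^ 2)) μ := by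
    intro k hk
    have hk1 : k - 1 ≤ n := le_trans (Nat.sub_le k 1) (Finset.mem_Icc.1 hk).2
    have haem : AEStronglyMeasurable (fun ω => Real.sqrt (M (k - 1) ω ^ 2 + v k ω ^ 2)) μ := by
      have h1 : AEMeasurable (fun ω => M (k - 1) ω ^ 2 + v k ω ^ 2) μ :=
        ((hMint _ hk1).aemeasurable.pow_const 2).add
          ((hv k hk).aemeasurable.pow_const 2)
      exact (Real.continuous_sqrt.measurable.comp_aemeasurable h1).aestronglyMeasurable
    refine Integrable.mono' (g := fun ω => M (k - 1) ω + |v k ω|)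
      ((hMint _ hk1).add (hv k hk).abs) haem ?_
    filter_upwards with ω
    rw [Real.norm_eq_abs, abs_of_nonneg (Real.sqrt_nonneg _)]
    calc Real.sqrt (M (k - 1) ω ^ 2 + v k ω ^ 2)
        ≤ Real.sqrt (M (k - 1) ω ^ 2) + Real.sqrt (v k ω ^ 2) :=
          my_sqrt_add_le _ _ (sq_nonneg _) (sq_nonneg _)
      _ = M (k - 1) ω + |v k ω| := by
          rw [Real.sqrt_sq_eq_abs, Real.sqrt_sq_eq_abs, abs_of_nonneg (hM0 _ ω)]
  -- integrability of LHS integrand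
  have hLint : Integrable (fun ω => Real.sqrt (∑ k ∈ Finset.Icc 1 n, v k ω ^ 2)) μ := by
    have haem : AEStronglyMeasurable (fun ω => Real.sqrt (∑ k ∈ Finset.Icc 1 n, v k ω ^ 2)) μ := by
      have : AEMeasurable (fun ω => ∑ k ∈ Finset.Icc 1 n, v k ω ^ 2) μ :=
        Finset.aemeasurable_fun_sum _ fun k hk => ((hv k hk).aemeasurable.pow_const 2)
      exact (Real.continuous_sqrt.measurable.comp_aemeasurable this).aestronglyMeasurable
    refine Integrable.mono' (g := fun ω => ∑ k ∈ Finset.Icc 1 n, |v k ω|)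
      (integrable_finset_sum _ fun k hk => (hv k hk).abs) haem ?_
    filter_upwards with ω
    rw [Real.norm_eq_abs, abs_of_nonneg (Real.sqrt_nonneg _)]
    calc Real.sqrt (∑ k ∈ Finset.Icc 1 n, v k ω ^ 2)
        ≤ ∑ k ∈ Finset.Icc 1 n, Real.sqrt (v k ω ^ 2) :=
          my_sqrt_sum_le _ _ fun k _ => sq_nonneg _
      _ = ∑ k ∈ Finset.Icc 1 n, |v k ω| := by
          refine Finset.sum_congr rfl fun k _ => ?_
          rw [Real.sqrt_sq_eq_abs]
  -- key pointwise inequality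
  have key : ∀ ω, Real.sqrt (∑ k ∈ Finset.Icc 1 n, v k ω ^ 2)
      ≤ M n ω + ∑ k ∈ Finset.Icc 1 n,
          (Real.sqrt (M (k - 1) ω ^ 2 + v k ω ^ 2) - M (k - 1) ω) := by
    intro ω
    have main : ∀ j, j ≤ n →
        Real.sqrt (M n ω ^ 2 + ∑ k ∈ Finset.Icc 1 j, v k ω ^ 2)
          ≤ M n ω + ∑ k ∈ Finset.Icc 1 j,
              (Real.sqrt (M (k - 1) ω ^ 2 + v k ω ^ 2) - M (k - 1) ω) := by
      intro j
      induction j with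
      | zero =>
        intro _
        simp [Real.sqrt_sq (hM0 n ω)]
      | succ m ih =>
        intro hm
        have hm' : m ≤ n := le_trans (Nat.le_succ m) hm
        rw [Finset.sum_Icc_succ_top (Nat.le_add_left 1 m),
          Finset.sum_Icc_succ_top (Nat.le_add_left 1 m)]
        have hc : M m ω ^ 2 ≤ M n ω ^ 2 + ∑ k ∈ Finset.Icc 1 m, v k ω ^ 2 := by
          have h1 : M m ω ^ 2 ≤ M n ω ^ 2 := by
            have := hMmono m n hm' ω
            nlinarith [hM0 m ω, hM0 n ω]
          have h2 : (0:ℝ) ≤ ∑ k ∈ Finset.Icc 1 m, v k ω ^ 2 :=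
            Finset.sum_nonneg fun k _ => sq_nonneg _
          linarith
        calc Real.sqrt (M n ω ^ 2 + (∑ k ∈ Finset.Icc 1 m, v k ω ^ 2 + v (m + 1) ω ^ 2))
            = Real.sqrt ((M n ω ^ 2 + ∑ k ∈ Finset.Icc 1 m, v k ω ^ 2) + v (m + 1) ω ^ 2) := by
              rw [← add_assoc]
          _ ≤ Real.sqrt (M n ω ^ 2 + ∑ k ∈ Finset.Icc 1 m, v k ω ^ 2)
                + (Real.sqrt (M m ω ^ 2 + v (m + 1) ω ^ 2) - Real.sqrt (M m ω ^ 2)) :=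
              my_sqrt_diff _ _ _ (sq_nonneg _) (sq_nonneg _) hc
          _ ≤ (M n ω + ∑ k ∈ Finset.Icc 1 m,
                (Real.sqrt (M (k - 1) ω ^ 2 + v k ω ^ 2) - M (k - 1) ω))
                + (Real.sqrt (M m ω ^ 2 + v (m + 1) ω ^ 2) - Real.sqrt (M m ω ^ 2)) := by
              gcongr
              exact ih hm'
          _ = M n ω + (∑ k ∈ Finset.Icc 1 m,
                (Real.sqrt (M (k - 1) ω ^ 2 + v k ω ^ 2) - M (k - 1) ω)
                + (Real.sqrt (M (m + 1 - 1) ω ^ 2 + v (m + 1) ω ^ 2) - M (m + 1 - 1) ω)) := by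
              simp only [Nat.add_sub_cancel, Real.sqrt_sq (hM0 m ω)]
              ring
    calc Real.sqrt (∑ k ∈ Finset.Icc 1 n, v k ω ^ 2)
        ≤ Real.sqrt (M n ω ^ 2 + ∑ k ∈ Finset.Icc 1 n, v k ω ^ 2) :=
          Real.sqrt_le_sqrt (by nlinarith [sq_nonneg (M n ω)])
      _ ≤ _ := main n le_rfl
  -- integrability of RHS integrand of key
  have hsubint : ∀ k ∈ Finset.Icc 1 n,
      Integrable (fun ω => Real.sqrt (M (k - 1) ω ^ 2 + v k ω ^ 2) - M (k - 1) ω) μ :=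
    fun k hk => (hGint k hk).sub (hMint _ (le_trans (Nat.sub_le k 1) (Finset.mem_Icc.1 hk).2))
  have hFint : Integrable (fun ω => M n ω + ∑ k ∈ Finset.Icc 1 n,
      (Real.sqrt (M (k - 1) ω ^ 2 + v k ω ^ 2) - M (k - 1) ω)) μ :=
    (hMint n le_rfl).add (integrable_finset_sum _ hsubint)
  -- integrate key
  have step1 : (∫ ω, Real.sqrt (∑ k ∈ Finset.Icc 1 n, v k ω ^ 2) ∂μ)
      ≤ ∫ ω, (M n ω + ∑ k ∈ Finset.Icc 1 n,
          (Real.sqrt (M (k - 1) ω ^ 2 + v k ω ^ 2) - M (k - 1) ω)) ∂μ :=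
    integral_mono hLint hFint key
  -- compute the RHS integral
  have step2 : (∫ ω, (M n ω + ∑ k ∈ Finset.Icc 1 n,
      (Real.sqrt (M (k - 1) ω ^ 2 + v k ω ^ 2) - M (k - 1) ω)) ∂μ)
      = (∫ ω, M n ω ∂μ) + ∑ k ∈ Finset.Icc 1 n,
          ((∫ ω, Real.sqrt (M (k - 1) ω ^ 2 + v k ω ^ 2) ∂μ) - ∫ ω, M (k - 1) ω ∂μ) := by
    rw [integral_add (hMint n le_rfl) (integrable_finset_sum _ hsubint)]
    congr 1
    rw [integral_finset_sum _ hsubint]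
    refine Finset.sum_congr rfl fun k hk => ?_
    exact integral_sub (hGint k hk)
      (hMint _ (le_trans (Nat.sub_le k 1) (Finset.mem_Icc.1 hk).2))
  -- bound the sum using hyp
  have step3 : ∑ k ∈ Finset.Icc 1 n,
      ((∫ ω, Real.sqrt (M (k - 1) ω ^ 2 + v k ω ^ 2) ∂μ) - ∫ ω, M (k - 1) ω ∂μ)
      ≤ ∑ k ∈ Finset.Icc 1 n,
          (((∫ ω, M k ω ∂μ) - ∫ ω, M (k - 1) ω ∂μ) - ∫ ω, w k ω ∂μ) := by
    refine Finset.sum_le_sum fun k hk => ?_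
    have := hyp k hk
    linarith
  -- telescoping
  have step4 : ∑ k ∈ Finset.Icc 1 n,
      (((∫ ω, M k ω ∂μ) - ∫ ω, M (k - 1) ω ∂μ) - ∫ ω, w k ω ∂μ)
      = ((∫ ω, M n ω ∂μ) - ∫ ω, M 0 ω ∂μ) - ∑ k ∈ Finset.Icc 1 n, ∫ ω, w k ω ∂μ := by
    rw [Finset.sum_sub_distrib, my_tele (fun k => ∫ ω, M k ω ∂μ) n]
  have hM0int : (∫ ω, M 0 ω ∂μ) = 0 := by
    have : ∀ ω, M 0 ω = 0 := by
      intro ω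
      rw [hM 0 ω]
      simp
    simp [funext this]
  -- final assembly
  have hRHS : (∫ ω, Real.sqrt (∑ k ∈ Finset.Icc 1 n, u k ω ^ 2) ∂μ) = ∫ ω, M n ω ∂μ := by
    refine integral_congr_ae (Filter.Eventually.of_forall fun ω => ?_)
    rw [hM n ω]
  rw [hRHS]
  have := step1
  rw [step2] at this
  linarith [step3, step4.le, step4.ge]
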